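/- Let a_t : M' → ℝ be continuous on a closed Riemannian manifold M' and {X'_n} an orthonormal basis of L²(TM') such that ∫_{M'} ⟨X'_n, X'_m⟩ a_t dV' = 0 for all n ≠ m and ∫_{M'} ⟨X'_n, X'_n⟩ a_t dV' = 1 for all n. If M' is connected, then a_t ≡ 1. -/

import Mathlib

open MeasureTheory RealInnerProductSpace

lemma integrable_inner_of_memL2 {α F : Type*} [MeasurableSpace α] {μ : Measure α}
    [NormedAddCommGroup F] [InnerProductSpace ℝ F] {f g : α → F}
    (hf : MemLp f 2 μ) (hg : MemLp g 2 μ) :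
    Integrable (fun x => ⟪f x, g x⟫) μ := by
  have h := L2.integrable_inner (𝕜 := ℝ) (hf.toLp f) (hg.toLp g)
  refine h.congr ?_
  filter_upwards [hf.coeFn_toLp, hg.coeFn_toLp] with x h1 h2
  rw [h1, h2]

/-- Abstract form of: on a connected closed Riemannian manifold `M'` with orthonormal
basis `{X'_n}` of `L²(TM')` (values modelled in a Hilbert space `F`), if a continuous
function `a_t` satisfies `∫ ⟨X'_n, X'_m⟩ a_t dV' = 0` for `n ≠ m` and
`∫ ⟨X'_n, X'_n⟩ a_t dV' = 1` for all `n`, then `a_t ≡ 1`. -/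
theorem density_eq_one_of_orthonormality
    (M' : Type*) [TopologicalSpace M'] [MeasurableSpace M'] [BorelSpace M']
    [PreconnectedSpace M']
    (μ : Measure M') [IsFiniteMeasure μ] [μ.IsOpenPosMeasure]
    (F : Type*) [NormedAddCommGroup F] [InnerProductSpace ℝ F]
    (X : ℕ → M' → F)
    (hX2 : ∀ n, MemLp (X n) 2 μ)
    (horth : ∀ n m : ℕ,
      (∫ x, ⟪X n x, X m x⟫ ∂μ) = if n = m then (1 : ℝ) else 0)
    (hcomplete : ∀ Y : M' → F, MemLp Y 2 μ →
      (∀ n : ℕ, (∫ x, ⟪Y x, X n x⟫ ∂μ) = 0) → Y =ᵐ[μ] 0)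
    (a : M' → ℝ) (ha : Continuous a)
    (haX : ∀ n : ℕ, MemLp (fun x => a x • X n x) 2 μ)
    (h0 : ∀ n m : ℕ, n ≠ m → (∫ x, ⟪X n x, X m x⟫ * a x ∂μ) = 0)
    (h1 : ∀ n : ℕ, (∫ x, ⟪X n x, X n x⟫ * a x ∂μ) = 1) :
    ∀ x : M', a x = 1 := by
  classical
  by_contra hcon
  push_neg at hcon
  obtain ⟨x0, hx0⟩ := hcon
  -- For each n, (a - 1) • X n is a.e. zero
  have hY0 : ∀ n, (fun x => a x • X n x - X n x) =ᵐ[μ] 0 := by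
    intro n
    apply hcomplete _ ((haX n).sub (hX2 n))
    intro m
    have hi1 : Integrable (fun x => ⟪a x • X n x, X m x⟫) μ :=
      integrable_inner_of_memL2 (haX n) (hX2 m)
    have hi2 : Integrable (fun x => ⟪X n x, X m x⟫) μ :=
      integrable_inner_of_memL2 (hX2 n) (hX2 m)
    have heq : (fun x => ⟪a x • X n x - X n x, X m x⟫)
        = fun x => ⟪a x • X n x, X m x⟫ - ⟪X n x, X m x⟫ := by
      funext x; rw [inner_sub_left]
    simp only [Pi.sub_apply]
    rw [heq, integral_sub hi1 hi2]
    have e1 : (∫ x, ⟪a x • X n x, X m x⟫ ∂μ) = ∫ x, ⟪X n x, X m x⟫ * a x ∂μ := by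
      refine integral_congr_ae (Filter.Eventually.of_forall fun x => ?_)
      simp only [real_inner_smul_left]; ring
    rw [e1, horth n m]
    by_cases h : n = m
    · subst h; rw [h1 n]; simp
    · rw [h0 n m h]; simp [h]
  have hae : ∀ᵐ x ∂μ, ∀ n, a x • X n x - X n x = 0 := by
    rw [ae_all_iff]
    intro n
    filter_upwards [hY0 n] with x hx using hx
  -- the set where a ≠ 1 is open and nonempty
  set S : Set M' := {x | a x ≠ 1} with hS
  have hSopen : IsOpen S := isOpen_ne_fun ha continuous_const
  have hSmeas : MeasurableSet S := hSopen.measurableSet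
  have hSpos : 0 < μ S := hSopen.measure_pos μ ⟨x0, hx0⟩
  -- a.e., every X n vanishes on S
  have hvanish : ∀ᵐ x ∂μ, x ∈ S → ∀ n, X n x = 0 := by
    filter_upwards [hae] with x hx hxS n
    have : (a x - 1) • X n x = 0 := by
      rw [sub_smul, one_smul]; exact hx n
    rcases smul_eq_zero.mp this with h | h
    · exact absurd (sub_eq_zero.mp h) hxS
    · exact h
  -- there is a point where X 0 ≠ 0
  have hexv : ∃ x1, X 0 x1 ≠ 0 := by
    by_contra h
    push_neg at h
    have : (∫ x, ⟪X 0 x, X 0 x⟫ ∂μ) = 0 := by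
      simp [h]
    rw [horth 0 0] at this
    simp at this
  obtain ⟨x1, hv⟩ := hexv
  set v : F := X 0 x1
  -- the indicator of S with value v is L² and orthogonal to all X n
  have hYmem : MemLp (S.indicator fun _ => v) 2 μ :=
    memLp_indicator_const 2 hSmeas v (Or.inr (measure_ne_top μ S))
  have hYorth : ∀ n : ℕ, (∫ x, ⟪S.indicator (fun _ => v) x, X n x⟫ ∂μ) = 0 := by
    intro n
    have : (fun x => ⟪S.indicator (fun _ => v) x, X n x⟫) =ᵐ[μ] 0 := by
      filter_upwards [hvanish] with x hx
      by_cases hxS : x ∈ S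
      · simp [hx hxS n]
      · simp [Set.indicator_of_notMem hxS]
    rw [integral_congr_ae this]; simp
  have hY0' := hcomplete _ hYmem hYorth
  -- contradiction: the indicator is nonzero on S which has positive measure
  have : ∀ᵐ x ∂μ, x ∉ S := by
    filter_upwards [hY0'] with x hx
    intro hxS
    rw [Set.indicator_of_mem hxS] at hx
    exact hv hx
  exact absurd (measure_eq_zero_iff_ae_notMem.mpr this) hSpos.ne'
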